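/- Let β>0, γ>0, σ>0, 0<α<1, S₀>0, R₀ᵢₙᵢₜ≥0, define r(S) := (γ/(σβ))·(1 − (1 − (σβ/γ)·R₀ᵢₙᵢₜ)·(S/S₀)^σ) and R̂(S) := (β/γ)·(S + ασ·r(S)) for 0≤S≤S₀. Assume R̂(S₀) = (β/γ)·(S₀ + ασR₀ᵢₙᵢₜ) > 1. Then R̂(0) = α < 1 < R̂(S₀), and there exists a unique S* with 0 < S* < S₀ such that R̂(S*) = 1. -/

import Mathlib

private lemma myConvexCongr {s : Set ℝ} {f g : ℝ → ℝ} (hf : ConvexOn ℝ s f)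
    (h : ∀ x ∈ s, f x = g x) : ConvexOn ℝ s g := by
  refine ⟨hf.1, fun x hx y hy a b ha hb hab => ?_⟩
  rw [← h _ (hf.1 hx hy ha hb hab), ← h _ hx, ← h _ hy]
  exact hf.2 hx hy ha hb hab

private lemma myConcaveCongr {s : Set ℝ} {f g : ℝ → ℝ} (hf : ConcaveOn ℝ s f)
    (h : ∀ x ∈ s, f x = g x) : ConcaveOn ℝ s g := by
  refine ⟨hf.1, fun x hx y hy a b ha hb hab => ?_⟩
  rw [← h _ (hf.1 hx hy ha hb hab), ← h _ hx, ← h _ hy]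
  exact hf.2 hx hy ha hb hab

private lemma myAffineConvex (a b : ℝ) {s : Set ℝ} (hs : Convex ℝ s) :
    ConvexOn ℝ s (fun x => a * x + b) := by
  refine ⟨hs, fun x _ y _ p q hp hq hpq => le_of_eq ?_⟩
  simp only [smul_eq_mul]
  linear_combination (-b) * hpq

private lemma myAffineConcave (a b : ℝ) {s : Set ℝ} (hs : Convex ℝ s) :
    ConcaveOn ℝ s (fun x => a * x + b) := by
  refine ⟨hs, fun x _ y _ p q hp hq hpq => ge_of_eq ?_⟩
  simp only [smul_eq_mul]
  linear_combination (-b) * hpq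

private lemma myConvexCompDiv {p : ℝ → ℝ} {d hi : ℝ} (hd : 0 < d)
    (hp : ConvexOn ℝ (Set.Ici 0) p) :
    ConvexOn ℝ (Set.Icc 0 hi) (fun x => p (x / d)) := by
  refine ⟨convex_Icc _ _, fun x hx y hy a b ha hb hab => ?_⟩
  have hx' : x / d ∈ Set.Ici (0:ℝ) := div_nonneg hx.1 hd.le
  have hy' : y / d ∈ Set.Ici (0:ℝ) := div_nonneg hy.1 hd.le
  have h := hp.2 hx' hy' ha hb hab
  have heq : (a • x + b • y) / d = a • (x / d) + b • (y / d) := by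
    simp only [smul_eq_mul]; ring
  dsimp only
  rw [heq]; exact h

private lemma myConcaveCompDiv {p : ℝ → ℝ} {d hi : ℝ} (hd : 0 < d)
    (hp : ConcaveOn ℝ (Set.Ici 0) p) :
    ConcaveOn ℝ (Set.Icc 0 hi) (fun x => p (x / d)) := by
  refine ⟨convex_Icc _ _, fun x hx y hy a b ha hb hab => ?_⟩
  have hx' : x / d ∈ Set.Ici (0:ℝ) := div_nonneg hx.1 hd.le
  have hy' : y / d ∈ Set.Ici (0:ℝ) := div_nonneg hy.1 hd.le
  have h := hp.2 hx' hy' ha hb hab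
  have heq : (a • x + b • y) / d = a • (x / d) + b • (y / d) := by
    simp only [smul_eq_mul]; ring
  dsimp only
  rw [heq]; exact h

/-- If f is convex on [a,b], f a < 0, f t ≤ 0, then f is negative strictly between a and t. -/
private lemma convex_neg_between {f : ℝ → ℝ} {a b s t : ℝ}
    (hf : ConvexOn ℝ (Set.Icc a b) f) (has : a < s) (hst : s < t) (htb : t ≤ b)
    (hfa : f a < 0) (hft : f t ≤ 0) : f s < 0 := by
  have hta : 0 < t - a := by linarith
  have hθ0 : 0 < (t - s) / (t - a) := div_pos (by linarith) hta
  have hμ0 : 0 ≤ (s - a) / (t - a) := div_nonneg (by linarith) hta.le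
  have hsum : (t - s) / (t - a) + (s - a) / (t - a) = 1 := by
    rw [← add_div, show t - s + (s - a) = t - a by ring, div_self hta.ne']
  have hmema : a ∈ Set.Icc a b := ⟨le_refl a, by linarith⟩
  have hmemt : t ∈ Set.Icc a b := ⟨by linarith, htb⟩
  have hcomb : ((t - s) / (t - a)) • a + ((s - a) / (t - a)) • t = s := by
    simp only [smul_eq_mul]; field_simp; ring
  have h := hf.2 hmema hmemt hθ0.le hμ0 hsum
  rw [hcomb] at h
  have h1 : ((t - s) / (t - a)) • f a < 0 := by
    simp only [smul_eq_mul]; exact mul_neg_of_pos_of_neg hθ0 hfa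
  have h2 : ((s - a) / (t - a)) • f t ≤ 0 := by
    simp only [smul_eq_mul]; exact mul_nonpos_of_nonneg_of_nonpos hμ0 hft
  linarith

/-- If f is convex on [a,b], f s ≤ 0, f b < 0, then f is negative strictly between s and b. -/
private lemma convex_neg_between' {f : ℝ → ℝ} {a b s t : ℝ}
    (hf : ConvexOn ℝ (Set.Icc a b) f) (has : a ≤ s) (hst : s < t) (htb : t < b)
    (hfs : f s ≤ 0) (hfb : f b < 0) : f t < 0 := by
  have hbs : 0 < b - s := by linarith
  have hθ0 : 0 ≤ (b - t) / (b - s) := div_nonneg (by linarith) hbs.le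
  have hμ0 : 0 < (t - s) / (b - s) := div_pos (by linarith) hbs
  have hsum : (b - t) / (b - s) + (t - s) / (b - s) = 1 := by
    rw [← add_div, show b - t + (t - s) = b - s by ring, div_self hbs.ne']
  have hmems : s ∈ Set.Icc a b := ⟨has, by linarith⟩
  have hmemb : b ∈ Set.Icc a b := ⟨by linarith, le_refl b⟩
  have hcomb : ((b - t) / (b - s)) • s + ((t - s) / (b - s)) • b = t := by
    simp only [smul_eq_mul]; field_simp; ring
  have h := hf.2 hmems hmemb hθ0 hμ0.le hsum
  rw [hcomb] at h
  have h1 : ((b - t) / (b - s)) • f s ≤ 0 := by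
    simp only [smul_eq_mul]; exact mul_nonpos_of_nonneg_of_nonpos hθ0 hfs
  have h2 : ((t - s) / (b - s)) • f b < 0 := by
    simp only [smul_eq_mul]; exact mul_neg_of_pos_of_neg hμ0 hfb
  linarith

/-- If `ℛ₀ = (β/γ)(S₀ + ασR₀) > 1` then `R̂(0) = α < 1 < R̂(S₀)` and
there is a unique root of `R̂(S) = 1` in `(0, S₀)`. -/
theorem sirb_unique_root_R0_gt_one (β γ σ α S₀ R₀init : ℝ)
    (hβ : 0 < β) (hγ : 0 < γ) (hσ : 0 < σ) (hα0 : 0 < α) (hα1 : α < 1)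
    (hS₀ : 0 < S₀) (hR₀ : 0 ≤ R₀init)
    (r Rhat : ℝ → ℝ)
    (hr : ∀ S : ℝ, r S = γ / (σ * β) * (1 - (1 - σ * β / γ * R₀init) * (S / S₀) ^ σ))
    (hRhat : ∀ S : ℝ, Rhat S = β / γ * (S + α * σ * r S))
    (hR0gt : 1 < β / γ * (S₀ + α * σ * R₀init)) :
    Rhat 0 = α ∧ α < 1 ∧ 1 < Rhat S₀ ∧
      ∃! Sstar : ℝ, Sstar ∈ Set.Ioo 0 S₀ ∧ Rhat Sstar = 1 := by
  have hβ' : β ≠ 0 := hβ.ne'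
  have hγ' : γ ≠ 0 := hγ.ne'
  have hσ' : σ ≠ 0 := hσ.ne'
  set q : ℝ := -(α * (1 - σ * β / γ * R₀init)) with hq
  -- key closed form
  have hkey : ∀ S : ℝ, Rhat S = β / γ * S + (α - 1) + q * (S / S₀) ^ σ + 1 := by
    intro S
    rw [hRhat, hr, hq]
    field_simp
    ring
  -- value at 0
  have h0 : Rhat 0 = α := by
    rw [hkey]
    rw [zero_div, Real.zero_rpow hσ']
    ring
  -- value at S₀
  have hS₀v : Rhat S₀ = β / γ * (S₀ + α * σ * R₀init) := by
    rw [hkey]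
    rw [div_self hS₀.ne', Real.one_rpow, hq]
    field_simp
    ring
  have h1S₀ : 1 < Rhat S₀ := by rw [hS₀v]; exact hR0gt
  refine ⟨h0, hα1, h1S₀, ?_⟩
  -- continuity of Rhat on [0, S₀]
  have hcont : ContinuousOn Rhat (Set.Icc 0 S₀) := by
    have : Continuous fun S : ℝ => β / γ * S + (α - 1) + q * (S / S₀) ^ σ + 1 := by
      have hpow : Continuous fun S : ℝ => (S / S₀) ^ σ := by
        rw [continuous_iff_continuousAt]
        intro x
        exact (continuousAt_id.div_const S₀).rpow_const (Or.inr hσ.le)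
      exact (((continuous_const.mul continuous_id).add continuous_const).add
        (continuous_const.mul hpow)).add continuous_const
    have heq : Rhat = fun S : ℝ => β / γ * S + (α - 1) + q * (S / S₀) ^ σ + 1 :=
      funext hkey
    rw [heq]
    exact this.continuousOn
  -- existence via IVT
  have hmem1 : (1:ℝ) ∈ Set.Ioo (Rhat 0) (Rhat S₀) := ⟨by rw [h0]; exact hα1, h1S₀⟩
  obtain ⟨Sstar, hSmem, hSval⟩ := intermediate_value_Ioo hS₀.le hcont hmem1
  -- convexity or concavity of f := Rhat - 1 on [0, S₀]
  have hIcc : Set.Icc (0:ℝ) S₀ ⊆ Set.Ici 0 := fun x hx => hx.1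
  have hconv :
      ConvexOn ℝ (Set.Icc 0 S₀) (fun S => Rhat S - 1) ∨
      ConcaveOn ℝ (Set.Icc 0 S₀) (fun S => Rhat S - 1) := by
    have haff : ConvexOn ℝ (Set.Icc (0:ℝ) S₀) (fun x => β / γ * x + (α - 1)) :=
      myAffineConvex _ _ (convex_Icc _ _)
    have haff' : ConcaveOn ℝ (Set.Icc (0:ℝ) S₀) (fun x => β / γ * x + (α - 1)) :=
      myAffineConcave _ _ (convex_Icc _ _)
    rcases le_total 1 σ with hσ1 | hσ1
    · -- x ↦ x^σ convex on Ici 0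
      have hbase : ConvexOn ℝ (Set.Icc (0:ℝ) S₀) (fun x => (x / S₀) ^ σ) :=
        myConvexCompDiv hS₀ (convexOn_rpow hσ1)
      rcases le_total 0 q with hq0 | hq0
      · left
        have := (haff.add (hbase.smul hq0))
        refine myConvexCongr this (fun x _ => ?_)
        simp only [Pi.add_apply, smul_eq_mul]
        rw [hkey]; ring
      · right
        have hneg : ConcaveOn ℝ (Set.Icc (0:ℝ) S₀) (fun x => -((x / S₀) ^ σ)) :=
          hbase.neg
        have := haff'.add (hneg.smul (neg_nonneg.mpr hq0))
        refine myConcaveCongr this (fun x _ => ?_)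
        simp only [Pi.add_apply, smul_eq_mul]
        rw [hkey]; ring
    · -- x ↦ x^σ concave on Ici 0
      have hbase : ConcaveOn ℝ (Set.Icc (0:ℝ) S₀) (fun x => (x / S₀) ^ σ) :=
        myConcaveCompDiv hS₀ (Real.concaveOn_rpow hσ.le hσ1)
      rcases le_total 0 q with hq0 | hq0
      · right
        have := haff'.add (hbase.smul hq0)
        refine myConcaveCongr this (fun x _ => ?_)
        simp only [Pi.add_apply, smul_eq_mul]
        rw [hkey]; ring
      · left
        have hneg : ConvexOn ℝ (Set.Icc (0:ℝ) S₀) (fun x => -((x / S₀) ^ σ)) :=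
          hbase.neg
        have := haff.add (hneg.smul (neg_nonneg.mpr hq0))
        refine myConvexCongr this (fun x _ => ?_)
        simp only [Pi.add_apply, smul_eq_mul]
        rw [hkey]; ring
  -- uniqueness
  have huniq : ∀ s t : ℝ, s ∈ Set.Ioo 0 S₀ → t ∈ Set.Ioo 0 S₀ →
      Rhat s = 1 → Rhat t = 1 → s = t := by
    have key : ∀ s t : ℝ, s ∈ Set.Ioo 0 S₀ → t ∈ Set.Ioo 0 S₀ →
        Rhat s = 1 → Rhat t = 1 → s < t → False := by
      intro s t hs ht hfs hft hst
      rcases hconv with hc | hc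
      · have := convex_neg_between hc hs.1 hst ht.2.le
          (by rw [h0]; linarith) (by rw [hft]; norm_num)
        rw [hfs] at this; norm_num at this
      · have := convex_neg_between' hc.neg hs.1.le hst ht.2
          (by simp only [Pi.neg_apply]; rw [hfs]; norm_num)
          (by simp only [Pi.neg_apply]; linarith)
        simp only [Pi.neg_apply] at this
        rw [hft] at this; norm_num at this
    intro s t hs ht hfs hft
    rcases lt_trichotomy s t with h | h | h
    · exact absurd (key s t hs ht hfs hft h) (fun x => x)
    · exact h
    · exact absurd (key t s ht hs hft hfs h) (fun x => x)
  exact ⟨Sstar, ⟨hSmem, hSval⟩, fun y hy => huniq y Sstar hy.1 hSmem hy.2 hSval⟩
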